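/- For any formal pathway q consisting of reactions from the formal basis F of a regular CRN C, there exists a formal pathway p in C with the same minimal initial state and final state as q, such that p can be interpreted as q. -/

import Mathlib

namespace CRNVerif

variable {σ : Type} [DecidableEq σ]

/-- A state is a multiset of species. -/
abbrev State (σ : Type) := Multiset σ
/-- A reaction is a pair (reactants, products) of multisets of species. -/
abbrev Reaction (σ : Type) := Multiset σ × Multiset σ
/-- A pathway is a finite sequence of reactions. -/
abbrev Pathway (σ : Type) := List (Reaction σ)

/-- Result of applying reaction `r` in state `S` (i.e. `S ⊕ r`). -/
def applyRxn (S : State σ) (r : Reaction σ) : State σ := S - r.1 + r.2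

/-- Minimal initial state of a pathway: the smallest state in which
its reactions can occur in succession. -/
def minInit : Pathway σ → State σ
  | [] => 0
  | r :: p => r.1 + (minInit p - r.2)

/-- State reached from `S` after performing all reactions of `p` in order. -/
def finalFrom (S : State σ) : Pathway σ → State σ
  | [] => S
  | r :: p => finalFrom (applyRxn S r) p

/-- The final state of a pathway (starting from its minimal initial state). -/
def finalState (p : Pathway σ) : State σ := finalFrom (minInit p) p

/-- The state `S_i` after the first `i` reactions, starting from the minimal initial state. -/
def stateAt (p : Pathway σ) (i : ℕ) : State σ := finalFrom (minInit p) (p.take i)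

/-- A state is formal if it contains only formal species (as given by `fm`). -/
def FormalState (fm : σ → Bool) (S : State σ) : Prop := ∀ x ∈ S, fm x = true

/-- `Formal(S)`: the multiset obtained by removing all intermediate species from `S`. -/
def formalPart (fm : σ → Bool) (S : State σ) : State σ := S.filter (fun x => fm x = true)

/-- A reaction is trivial if reactants equal products. -/
def TrivialRxn (r : Reaction σ) : Prop := r.1 = r.2

/-- A CRN is a (finite) set of nontrivial reactions. -/
def NontrivialRxns (C : Finset (Reaction σ)) : Prop := ∀ r ∈ C, ¬ TrivialRxn r

/-- A formal CRN contains only formal reactions. -/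
def IsFormalCRN (fm : σ → Bool) (C : Finset (Reaction σ)) : Prop :=
  ∀ r ∈ C, FormalState fm r.1 ∧ FormalState fm r.2

/-- `p` is a pathway of the CRN `C`. -/
def PathwayOf (C : Finset (Reaction σ)) (p : Pathway σ) : Prop := ∀ r ∈ p, r ∈ C

/-- `Interleave l₁ l₂ l`: `l` can be partitioned into the two (order-preserving,
not necessarily contiguous) subsequences `l₁` and `l₂`. -/
inductive Interleave {α : Type u} : List α → List α → List α → Prop
  | nil : Interleave [] [] []
  | left {a : α} {l₁ l₂ l : List α} : Interleave l₁ l₂ l → Interleave (a :: l₁) l₂ (a :: l)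
  | right {a : α} {l₁ l₂ l : List α} : Interleave l₁ l₂ l → Interleave l₁ (a :: l₂) (a :: l)

/-- `InterleaveMany qs p`: `p` is generated by interleaving the lists in `qs`. -/
inductive InterleaveMany {α : Type u} : List (List α) → List α → Prop
  | nil : InterleaveMany [] []
  | cons {q r p : List α} {qs : List (List α)} :
      Interleave q r p → InterleaveMany qs r → InterleaveMany (q :: qs) p

/-- A pathway is semiformal if its minimal initial state is formal. -/
def Semiformal (fm : σ → Bool) (p : Pathway σ) : Prop := FormalState fm (minInit p)

/-- A formal pathway: a (nonempty) pathway whose minimal initial state and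
final state are both formal. -/
def FormalPathway (fm : σ → Bool) (p : Pathway σ) : Prop :=
  p ≠ [] ∧ FormalState fm (minInit p) ∧ FormalState fm (finalState p)

/-- A formal pathway is decomposable if it can be partitioned into two nonempty
subsequences that are each formal pathways. -/
def FDecomposable (fm : σ → Bool) (p : Pathway σ) : Prop :=
  ∃ q₁ q₂, q₁ ≠ [] ∧ q₂ ≠ [] ∧ Interleave q₁ q₂ p ∧
    FormalPathway fm q₁ ∧ FormalPathway fm q₂

/-- A prime formal pathway is a formal pathway that is not decomposable. -/
def PrimePathway (fm : σ → Bool) (p : Pathway σ) : Prop :=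
  FormalPathway fm p ∧ ¬ FDecomposable fm p

/-- The formal basis: the set of (initial state, final state) pairs of prime
formal pathways of `C`. -/
def formalBasis (fm : σ → Bool) (C : Finset (Reaction σ)) : Set (Reaction σ) :=
  { r | ∃ p, PathwayOf C p ∧ PrimePathway fm p ∧ r = (minInit p, finalState p) }

/-- Two sets of reactions are equal up to addition/removal of trivial reactions. -/
def EqUpToTrivial (A B : Set (Reaction σ)) : Prop :=
  {r ∈ A | ¬ TrivialRxn r} = {r ∈ B | ¬ TrivialRxn r}

/-- The reaction at (0-based) index `j` of `p` is a turning point: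
before it only formal species of the initial state appear, from it on only formal
species of the final state appear, and at the moment the turning point fires,
no formal species are left over. -/
def TurningAt (fm : σ → Bool) (p : Pathway σ) (j : ℕ) : Prop :=
  ∃ h : j < p.length,
    (∀ i ≤ j, formalPart fm (stateAt p i) ≤ minInit p) ∧
    (∀ i, j < i → i ≤ p.length → formalPart fm (stateAt p i) ≤ finalState p) ∧
    formalPart fm (stateAt p j - (p.get ⟨j, h⟩).1) = 0

/-- A regular formal pathway: one that implements a formal reaction,
i.e. has a turning point. -/
def RegularPathway (fm : σ → Bool) (p : Pathway σ) : Prop :=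
  FormalPathway fm p ∧ ∃ j, TurningAt fm p j

/-- A CRN is regular if every prime formal pathway is regular. -/
def RegularCRN (fm : σ → Bool) (C : Finset (Reaction σ)) : Prop :=
  ∀ p, PathwayOf C p → PrimePathway fm p → RegularPathway fm p

/-- `q` is a strong closing pathway for `p` (within CRN `C`): it can occur in the
final state of `p`, consumes no formal species, and leads back to a formal state. -/
def ClosingPathway (fm : σ → Bool) (C : Finset (Reaction σ)) (p q : Pathway σ) : Prop :=
  PathwayOf C q ∧ minInit q ≤ finalState p ∧ (∀ r ∈ q, formalPart fm r.1 = 0) ∧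
  FormalState fm (finalFrom (finalState p) q)

/-- A CRN is strongly tidy if every semiformal pathway has a strong closing pathway. -/
def StronglyTidy (fm : σ → Bool) (C : Finset (Reaction σ)) : Prop :=
  ∀ p, PathwayOf C p → Semiformal fm p → ∃ q, ClosingPathway fm C p q

/-- A semiformal pathway is decomposable if it can be partitioned into two
nonempty subsequences that are each semiformal. -/
def SDecomposable (fm : σ → Bool) (p : Pathway σ) : Prop :=
  ∃ q₁ q₂, q₁ ≠ [] ∧ q₂ ≠ [] ∧ Interleave q₁ q₂ p ∧ Semiformal fm q₁ ∧ Semiformal fm q₂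

/-- The width of a pathway: the maximum size of the states it passes through. -/
def width (p : Pathway σ) : ℕ :=
  ((List.range (p.length + 1)).map (fun i => Multiset.card (stateAt p i))).foldr max 0

/-- The branching factor of a CRN. -/
def branching (C : Finset (Reaction σ)) : ℕ :=
  C.sup (fun r => max (Multiset.card r.1) (Multiset.card r.2))

/-- Formal state `T` is reachable from `S` via reactions of `C`. -/
def Reachable (C : Finset (Reaction σ)) (S T : State σ) : Prop :=
  ∃ p, PathwayOf C p ∧ minInit p ≤ S ∧ finalFrom S p = T

/-- `C` and `C'` share no intermediate species: any species occurring in both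
CRNs is formal. -/
def NoSharedIntermediates (fm : σ → Bool) (C C' : Finset (Reaction σ)) : Prop :=
  ∀ r ∈ C, ∀ r' ∈ C', ∀ x : σ, x ∈ r.1 + r.2 → x ∈ r'.1 + r'.2 → fm x = true

/-- The formal closure of a pathway: the minimal state containing the formal part
of every state along the pathway. -/
def formalClosure (fm : σ → Bool) (p : Pathway σ) : State σ :=
  ((List.range (p.length + 1)).map (fun i => formalPart fm (stateAt p i))).foldr (· ∪ ·) 0

/-- The decomposed final states of a semiformal pathway: all pairs of final
states arising from decompositions into two (nonempty) semiformal pathways. -/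
def DFS (fm : σ → Bool) (p : Pathway σ) : Set (State σ × State σ) :=
  { T | ∃ q₁ q₂, q₁ ≠ [] ∧ q₂ ≠ [] ∧ Interleave q₁ q₂ p ∧
        Semiformal fm q₁ ∧ Semiformal fm q₂ ∧ T = (finalState q₁, finalState q₂) }

/-- The minimal state containing the formal parts of all states strictly after index `j`. -/
def rfsAt (fm : σ → Bool) (p : Pathway σ) (j : ℕ) : State σ :=
  (((List.range (p.length + 1)).filter (fun i => j < i)).map
      (fun i => formalPart fm (stateAt p i))).foldr (· ∪ ·) 0

/-- The regular final states of a pathway: the minimal states `T` witnessed by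
potential turning point reactions. -/
def RFS (fm : σ → Bool) (p : Pathway σ) : Set (State σ) :=
  { T | ∃ j, ∃ h : j < p.length,
      (∀ i ≤ j, formalPart fm (stateAt p i) ≤ minInit p) ∧
      formalPart fm (stateAt p j - (p.get ⟨j, h⟩).1) = 0 ∧
      T = rfsAt fm p j }

/-- The signature of a semiformal pathway: (initial state, final state, width,
formal closure, DFS, RFS). -/
def signature (fm : σ → Bool) (p : Pathway σ) :
    State σ × State σ × ℕ × State σ × Set (State σ × State σ) × Set (State σ) :=
  (minInit p, finalState p, width p, formalClosure fm p, DFS fm p, RFS fm p)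

/-- An annotated prime pathway: exactly its chosen turning point is annotated,
with the corresponding formal basis reaction. -/
def GoodAnnotation (fm : σ → Bool) (ap : List (Reaction σ × Option (Reaction σ))) : Prop :=
  PrimePathway fm (ap.map Prod.fst) ∧
  ∃ j, TurningAt fm (ap.map Prod.fst) j ∧
    ap.map Prod.snd = (List.range ap.length).map
      (fun i => if i = j then
          some (minInit (ap.map Prod.fst), finalState (ap.map Prod.fst)) else none)

/-- `p` can be interpreted as `q`: `q` can occur in the initial state of `p`, has
the same net effect, and there is a decomposition of `p` into prime formal pathways
such that replacing a chosen turning point of each by the corresponding formal basis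
element and removing all other reactions yields `q`. -/
def Interpreted (fm : σ → Bool) (p q : Pathway σ) : Prop :=
  minInit q ≤ minInit p ∧
  finalFrom (minInit p) q = finalState p ∧
  ∃ ap : List (Reaction σ × Option (Reaction σ)),
    ap.map Prod.fst = p ∧ (ap.map Prod.snd).reduceOption = q ∧
    ∃ aps, InterleaveMany aps ap ∧ ∀ a ∈ aps, GoodAnnotation fm a


lemma finalFrom_of_le (p : Pathway σ) : ∀ S : State σ, minInit p ≤ S →
    finalFrom S p = S - minInit p + finalState p := by
  induction p with
  | nil => intro S _; simp [finalFrom, minInit, finalState]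
  | cons r p ih =>
    intro S hS
    have hS' : minInit p ≤ applyRxn S r := by
      rw [Multiset.le_iff_count] at hS ⊢
      intro x
      have := hS x
      simp only [minInit, applyRxn, Multiset.count_add, Multiset.count_sub] at this ⊢
      omega
    have h2 : minInit p ≤ applyRxn (minInit (r :: p)) r := by
      rw [Multiset.le_iff_count]; intro x
      simp only [minInit, applyRxn, Multiset.count_add, Multiset.count_sub]
      omega
    have hfs : finalState (r :: p) = applyRxn (minInit (r :: p)) r - minInit p + finalState p := by
      show finalFrom _ (r :: p) = _
      rw [show finalFrom (minInit (r :: p)) (r :: p) = finalFrom (applyRxn (minInit (r :: p)) r) p from rfl]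
      rw [ih _ h2]
    show finalFrom (applyRxn S r) p = _
    rw [ih _ hS', hfs]
    rw [Multiset.le_iff_count] at hS
    ext x
    have := hS x
    simp only [minInit, applyRxn, Multiset.count_add, Multiset.count_sub] at this ⊢
    omega

lemma finalState_cons (r : Reaction σ) (p : Pathway σ) :
    finalState (r :: p) = (r.2 - minInit p) + finalState p := by
  have h2 : minInit p ≤ applyRxn (minInit (r :: p)) r := by
    rw [Multiset.le_iff_count]; intro x
    simp only [minInit, applyRxn, Multiset.count_add, Multiset.count_sub]
    omega
  show finalFrom (applyRxn (minInit (r :: p)) r) p = _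
  rw [finalFrom_of_le _ _ h2]
  ext x
  simp only [minInit, applyRxn, Multiset.count_add, Multiset.count_sub]
  omega

lemma finalFrom_append (S : State σ) (p q : Pathway σ) :
    finalFrom S (p ++ q) = finalFrom (finalFrom S p) q := by
  induction p generalizing S with
  | nil => rfl
  | cons r p ih => exact ih (applyRxn S r)

lemma minInit_append (p q : Pathway σ) :
    minInit (p ++ q) = minInit p + (minInit q - finalState p) := by
  induction p with
  | nil =>
    show minInit q = 0 + (minInit q - finalState ([] : Pathway σ))
    simp [finalState, finalFrom, minInit]
  | cons r p ih =>
    show r.1 + (minInit (p ++ q) - r.2) = _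
    rw [ih, finalState_cons]
    ext x
    simp only [minInit, Multiset.count_add, Multiset.count_sub]
    omega

lemma finalState_append (p q : Pathway σ) :
    finalState (p ++ q) = (finalState p - minInit q) + finalState q := by
  have h1 : minInit p ≤ minInit (p ++ q) := by
    rw [minInit_append]; exact Multiset.le_add_right _ _
  have h2 : minInit q ≤ finalFrom (minInit (p ++ q)) p := by
    rw [finalFrom_of_le _ _ h1, minInit_append, Multiset.le_iff_count]
    intro x
    simp only [Multiset.count_add, Multiset.count_sub]
    omega
  show finalFrom (minInit (p ++ q)) (p ++ q) = _
  rw [finalFrom_append, finalFrom_of_le _ _ h2, finalFrom_of_le _ _ h1, minInit_append]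
  ext x
  simp only [Multiset.count_add, Multiset.count_sub]
  omega

omit [DecidableEq σ] in
lemma interleave_nil_left (l : List (Reaction σ)) : Interleave ([] : Pathway σ) l l := by
  induction l with
  | nil => exact Interleave.nil
  | cons a l ih => exact Interleave.right ih

lemma interleave_append {α : Type} (l₁ l₂ : List α) : Interleave l₁ l₂ (l₁ ++ l₂) := by
  induction l₁ with
  | nil =>
    induction l₂ with
    | nil => exact Interleave.nil
    | cons a l ih => exact Interleave.right ih
  | cons a l ih => exact Interleave.left ih

lemma reduceOption_all_none {α : Type} (l : List (Option α)) (h : ∀ x ∈ l, x = none) :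
    l.reduceOption = [] := by
  induction l with
  | nil => rfl
  | cons a l ih =>
    have := h a (by simp)
    subst this
    rw [List.reduceOption_cons_of_none]
    exact ih (fun x hx => h x (by simp [hx]))

lemma reduceOption_range_single {α : Type} (n j : ℕ) (r : α) (hj : j < n) :
    ((List.range n).map (fun i => if i = j then some r else none)).reduceOption = [r] := by
  induction n with
  | zero => omega
  | succ n ih =>
    rw [List.range_succ, List.map_append, List.reduceOption_append]
    rcases Nat.lt_or_ge j n with h | h
    · rw [ih h]
      have : (if n = j then some r else none) = none := by
        rw [if_neg]; omega
      simp [this]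
    · have hjn : j = n := by omega
      subst hjn
      have h1 : ((List.range j).map (fun i => if i = j then some r else none)).reduceOption = [] := by
        apply reduceOption_all_none
        intro x hx
        simp only [List.mem_map, List.mem_range] at hx
        obtain ⟨i, hi, hx⟩ := hx
        rw [if_neg (by omega)] at hx
        exact hx.symm
      simp [h1]

lemma main_aux (fm : σ → Bool) (C : Finset (Reaction σ)) (hreg : RegularCRN fm C) :
    ∀ q : Pathway σ, (∀ r ∈ q, r ∈ formalBasis fm C) →
    ∃ (p : Pathway σ) (ap : List (Reaction σ × Option (Reaction σ)))
      (aps : List (List (Reaction σ × Option (Reaction σ)))),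
      PathwayOf C p ∧ (q ≠ [] → p ≠ []) ∧ minInit p = minInit q ∧ finalState p = finalState q ∧
      ap.map Prod.fst = p ∧ (ap.map Prod.snd).reduceOption = q ∧
      InterleaveMany aps ap ∧ ∀ a ∈ aps, GoodAnnotation fm a := by
  intro q
  induction q with
  | nil =>
    intro _
    refine ⟨[], [], [], ?_, by simp, rfl, rfl, rfl, rfl, InterleaveMany.nil, by simp⟩
    intro r h; cases h
  | cons r q ih =>
    intro hq
    obtain ⟨p', ap', aps', hP', hne', hmi', hfs', hfst', hsnd', hIM', hGA'⟩ :=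
      ih (fun s hs => hq s (by simp [hs]))
    obtain ⟨pr, hprC, hprime, hr⟩ := hq r (by simp)
    obtain ⟨_, j, hturn⟩ := hreg pr hprC hprime
    obtain ⟨hj, ht1, ht2, ht3⟩ := hturn
    subst hr
    set an := (List.range pr.length).map
      (fun i => if i = j then some (minInit pr, finalState pr) else none) with han
    set apr := pr.zip an with hapr
    have hlen : pr.length ≤ an.length := by simp [han]
    have hlen' : an.length ≤ pr.length := by simp [han]
    have hfstr : apr.map Prod.fst = pr := List.map_fst_zip hlen
    have hsndr : apr.map Prod.snd = an := List.map_snd_zip hlen'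
    have haplen : apr.length = pr.length := by
      simp [hapr, han]
    refine ⟨pr ++ p', apr ++ ap', apr :: aps', ?_, ?_, ?_, ?_, ?_, ?_, ?_, ?_⟩
    · intro s hs
      rcases List.mem_append.1 hs with h | h
      · exact hprC s h
      · exact hP' s h
    · intro _
      have : pr ≠ [] := hprime.1.1
      simp [this]
    · rw [minInit_append, hmi']
      rfl
    · rw [finalState_append, hmi', hfs', finalState_cons]
    · rw [List.map_append, hfstr, hfst']
    · rw [List.map_append, List.reduceOption_append, hsndr, hsnd', han,
        reduceOption_range_single _ _ _ hj]
      rfl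
    · exact InterleaveMany.cons (interleave_append apr ap') hIM'
    · intro a ha
      rcases List.mem_cons.1 ha with h | h
      · subst h
        refine ⟨?_, j, ?_, ?_⟩
        · rw [hfstr]; exact hprime
        · rw [hfstr]; exact ⟨hj, ht1, ht2, ht3⟩
        · rw [hsndr, hfstr, haplen]
      · exact hGA' a h

/-- For any formal pathway `q` of the formal basis of a regular CRN `C`, there is a
formal pathway `p` of `C` with the same minimal initial and final states that can be
interpreted as `q`. -/
theorem exists_pathway_interpreted_as_basis_pathway {σ : Type} [DecidableEq σ]
    (fm : σ → Bool) (C : Finset (Reaction σ)) (hC : NontrivialRxns C)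
    (hreg : RegularCRN fm C) (q : Pathway σ)
    (hq : ∀ r ∈ q, r ∈ formalBasis fm C) (hqf : FormalPathway fm q) :
    ∃ p : Pathway σ, PathwayOf C p ∧ FormalPathway fm p ∧
      minInit p = minInit q ∧ finalState p = finalState q ∧ Interpreted fm p q := by
  obtain ⟨p, ap, aps, hP, hne, hmi, hfs, hfst, hsnd, hIM, hGA⟩ :=
    main_aux fm C hreg q hq
  refine ⟨p, hP, ⟨hne hqf.1, by rw [hmi]; exact hqf.2.1, by rw [hfs]; exact hqf.2.2⟩,
    hmi, hfs, ?_, ?_, ap, hfst, hsnd, aps, hIM, hGA⟩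
  · rw [hmi]
  · rw [hmi, hfs]; rfl

end CRNVerif
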